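/- Let G be a group acting on a set, Γ ≤ G a subgroup, γ ∈ Γ, K ≤ G a subgroup, and Γ_γ, G_γ the centralizers of γ in Γ and G respectively. Then the natural projection K\G/Γ_γ → K\G/G_γ is surjective, and for each fiber over a class KxG_γ, the fiber is in bijection with a quotient of G_γ/Γ_γ; in particular if the sets are finite, |{x ∈ K\G/Γ_γ : xγx⁻¹ ∈ S}| = Σ over classes in K\G/G_γ with xγx⁻¹ ∈ S of the corresponding fiber cardinalities, for any conjugation-stable set S = KA⁻K. -/

import Mathlib

open scoped Pointwise

/-- Let `G` be a group, `Γ ≤ G` a subgroup, `γ ∈ Γ`, `K ≤ G` a subgroup, and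
let `Γ_γ`, `G_γ` denote the centralizers of `γ` in `Γ` and `G` respectively.
Then the natural projection `K\G/Γ_γ → K\G/G_γ` is surjective, each fiber is
in bijection with a quotient of `G_γ/Γ_γ` (i.e. receives a surjection from
`G_γ/Γ_γ`), and for every left-and-right `K`-stable subset `S ⊆ G` (such as
`S = K A⁻ K`), if `K\G/Γ_γ` is finite then
`|{x ∈ K\G/Γ_γ : xγx⁻¹ ∈ S}|` equals the sum over the classes
`y ∈ K\G/G_γ` with `yγy⁻¹ ∈ S` of the cardinalities of the fibers over `y`. -/
theorem stmt8 {G : Type*} [Group G] (K Γ : Subgroup G) (γ : G) (hγ : γ ∈ Γ)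
    (S : Set G) (hS : ∀ k ∈ K, ∀ k' ∈ K, ∀ s ∈ S, k * s * k' ∈ S) :
    ∃ φ : DoubleCoset.Quotient (K : Set G) ((Γ ⊓ Subgroup.centralizer {γ} : Subgroup G) : Set G) →
        DoubleCoset.Quotient (K : Set G) ((Subgroup.centralizer {γ} : Subgroup G) : Set G),
      (∀ g : G, φ (DoubleCoset.mk K (Γ ⊓ Subgroup.centralizer {γ}) g)
          = DoubleCoset.mk K (Subgroup.centralizer {γ}) g) ∧
      Function.Surjective φ ∧
      (∀ y, ∃ f : (Subgroup.centralizer {γ} : Subgroup G) ⧸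
            ((Γ ⊓ Subgroup.centralizer {γ}).subgroupOf (Subgroup.centralizer {γ})) →
            {x // φ x = y}, Function.Surjective f) ∧
      (∀ _ : Finite (DoubleCoset.Quotient (K : Set G)
            ((Γ ⊓ Subgroup.centralizer {γ} : Subgroup G) : Set G)),
        Nat.card {x : DoubleCoset.Quotient (K : Set G)
            ((Γ ⊓ Subgroup.centralizer {γ} : Subgroup G) : Set G) //
            ∃ g : G, DoubleCoset.mk K (Γ ⊓ Subgroup.centralizer {γ}) g = x ∧ g * γ * g⁻¹ ∈ S}
          = ∑ᶠ y ∈ {y : DoubleCoset.Quotient (K : Set G)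
              ((Subgroup.centralizer {γ} : Subgroup G) : Set G) |
              ∃ g : G, DoubleCoset.mk K (Subgroup.centralizer {γ}) g = y ∧ g * γ * g⁻¹ ∈ S},
              Nat.card {x // φ x = y}) := by
  classical
  set C : Subgroup G := Subgroup.centralizer {γ} with hCdef
  set D : Subgroup G := Γ ⊓ C with hDdef
  -- elements of C conjugate γ to itself
  have hcc : ∀ c ∈ C, c * γ * c⁻¹ = γ := by
    intro c hc
    have h := Subgroup.mem_centralizer_iff.mp hc γ (Set.mem_singleton γ)
    rw [← h, mul_inv_cancel_right]
  -- the projection φ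
  refine ⟨Quotient.map' id (fun a b hab => ?_), ?_, ?_, ?_, ?_⟩
  · rw [DoubleCoset.rel_iff] at hab ⊢
    obtain ⟨k, hk, d, hd, rfl⟩ := hab
    exact ⟨k, hk, d, hd.2, rfl⟩
  · intro g; rfl
  · intro y
    exact ⟨DoubleCoset.mk K D y.out, by rw [show (Quotient.map' id _ (DoubleCoset.mk K D y.out) :
      DoubleCoset.Quotient (K : Set G) (C : Set G)) = DoubleCoset.mk K C y.out from rfl,
      DoubleCoset.out_eq']⟩
  · -- fibers receive surjections from C ⧸ (D.subgroupOf C)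
    intro y
    set g₀ : G := y.out with hg₀
    have hφmk : ∀ g : G, (Quotient.map' id (fun a b hab => by
        rw [DoubleCoset.rel_iff] at hab ⊢
        obtain ⟨k, hk, d, hd, rfl⟩ := hab
        exact ⟨k, hk, d, hd.2, rfl⟩) (DoubleCoset.mk K D g) :
        DoubleCoset.Quotient (K : Set G) (C : Set G)) = DoubleCoset.mk K C g := fun g => rfl
    refine ⟨fun q => Quotient.liftOn' q
      (fun c => ⟨DoubleCoset.mk K D (g₀ * (c : G)), ?_⟩) ?_, ?_⟩
    · -- φ (mk (g₀ * c)) = y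
      rw [hφmk]
      have : DoubleCoset.mk K C (g₀ * (c : G)) = DoubleCoset.mk K C g₀ := by
        rw [DoubleCoset.eq]
        exact ⟨1, K.one_mem, (c : G)⁻¹, C.inv_mem c.2, by group⟩
      rw [this, DoubleCoset.out_eq']
    · -- well-defined
      intro a b hab
      have hab' : (a : G)⁻¹ * (b : G) ∈ D := by
        have := QuotientGroup.leftRel_apply.mp hab
        exact (Subgroup.mem_subgroupOf).mp this
      refine Subtype.ext ?_
      show DoubleCoset.mk K D (g₀ * (a : G)) = DoubleCoset.mk K D (g₀ * (b : G))
      rw [DoubleCoset.eq]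
      exact ⟨1, K.one_mem, (a : G)⁻¹ * (b : G), hab', by group⟩
    · -- surjectivity on fiber
      rintro ⟨x, hx⟩
      obtain ⟨g, hg⟩ : ∃ g : G, DoubleCoset.mk K D g = x := ⟨x.out, DoubleCoset.out_eq' _ _ _⟩
      have hyg : DoubleCoset.mk K C g₀ = DoubleCoset.mk K C g := by
        rw [← hφmk g, hg, hx, hg₀]
        exact DoubleCoset.out_eq' _ _ _
      obtain ⟨k, hk, c, hc, hgc⟩ := (DoubleCoset.eq _ _ _ _).mp hyg
      refine ⟨QuotientGroup.mk ⟨c, hc⟩, Subtype.ext ?_⟩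
      show DoubleCoset.mk K D (g₀ * c) = x
      rw [← hg, hgc, DoubleCoset.eq]
      exact ⟨k, hk, 1, D.one_mem, by group⟩
  · -- the counting statement
    intro hfin
    set φ : DoubleCoset.Quotient (K : Set G) (D : Set G) →
        DoubleCoset.Quotient (K : Set G) (C : Set G) := Quotient.map' id (fun a b hab => by
      rw [DoubleCoset.rel_iff] at hab ⊢
      obtain ⟨k, hk, d, hd, rfl⟩ := hab
      exact ⟨k, hk, d, hd.2, rfl⟩) with hφdef
    have hφmk : ∀ g : G, φ (DoubleCoset.mk K D g) = DoubleCoset.mk K C g := fun g => rfl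
    have hφsurj : Function.Surjective φ := by
      intro z
      exact ⟨DoubleCoset.mk K D z.out, by rw [hφmk, DoubleCoset.out_eq']⟩
    -- condition is conjugation-invariant along C-double cosets
    have hwd : ∀ g g' : G, DoubleCoset.mk K C g = DoubleCoset.mk K C g' →
        (g * γ * g⁻¹ ∈ S ↔ g' * γ * g'⁻¹ ∈ S) := by
      intro g g' hgg'
      obtain ⟨k, hk, c, hc, rfl⟩ := (DoubleCoset.eq _ _ _ _).mp hgg'
      have hconj : (k * g * c) * γ * (k * g * c)⁻¹ = k * (g * γ * g⁻¹) * k⁻¹ := by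
        have h1 : c * γ * c⁻¹ = γ := hcc c hc
        calc (k * g * c) * γ * (k * g * c)⁻¹
            = k * (g * (c * γ * c⁻¹) * g⁻¹) * k⁻¹ := by group
          _ = k * (g * γ * g⁻¹) * k⁻¹ := by rw [h1]
      rw [hconj]
      constructor
      · intro h; exact hS k hk k⁻¹ (K.inv_mem hk) _ h
      · intro h
        have := hS k⁻¹ (K.inv_mem hk) k hk _ h
        simpa [mul_assoc] using this
    -- P x ↔ Q (φ x)
    have hPQ : ∀ x : DoubleCoset.Quotient (K : Set G) (D : Set G),
        (∃ g : G, DoubleCoset.mk K D g = x ∧ g * γ * g⁻¹ ∈ S) ↔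
        (∃ g : G, DoubleCoset.mk K C g = φ x ∧ g * γ * g⁻¹ ∈ S) := by
      intro x
      constructor
      · rintro ⟨g, rfl, hs⟩
        exact ⟨g, (hφmk g).symm, hs⟩
      · rintro ⟨g, hg, hs⟩
        obtain ⟨g₀, hg₀⟩ : ∃ g₀ : G, DoubleCoset.mk K D g₀ = x := ⟨x.out, DoubleCoset.out_eq' _ _ _⟩
        have : DoubleCoset.mk K C g = DoubleCoset.mk K C g₀ := by rw [hg, ← hg₀, hφmk]
        exact ⟨g₀, hg₀, (hwd g g₀ this).mp hs⟩
    have hCfin : Finite (DoubleCoset.Quotient (K : Set G) (C : Set G)) :=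
      Finite.of_surjective φ hφsurj
    -- the equivalence
    let T : Set (DoubleCoset.Quotient (K : Set G) (C : Set G)) :=
      {y | ∃ g : G, DoubleCoset.mk K C g = y ∧ g * γ * g⁻¹ ∈ S}
    let e : {x : DoubleCoset.Quotient (K : Set G) (D : Set G) //
        ∃ g : G, DoubleCoset.mk K D g = x ∧ g * γ * g⁻¹ ∈ S} ≃
        Σ y : T, {x // φ x = (y : DoubleCoset.Quotient (K : Set G) (C : Set G))} :=
      { toFun := fun x => ⟨⟨φ x.1, (hPQ x.1).mp x.2⟩, ⟨x.1, rfl⟩⟩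
        invFun := fun p => ⟨p.2.1, (hPQ p.2.1).mpr (by rw [p.2.2]; exact p.1.2)⟩
        left_inv := fun x => Subtype.ext rfl
        right_inv := by
          rintro ⟨⟨y, hy⟩, x, hx⟩
          obtain rfl : φ x = y := hx
          rfl }
    have hTfin : Finite T := Subtype.finite
    have h1 : Nat.card {x : DoubleCoset.Quotient (K : Set G) (D : Set G) //
        ∃ g : G, DoubleCoset.mk K D g = x ∧ g * γ * g⁻¹ ∈ S} =
        ∑ᶠ y : T, Nat.card {x // φ x = (y : DoubleCoset.Quotient (K : Set G) (C : Set G))} := by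
      rw [Nat.card_congr e]
      have : Fintype T := Fintype.ofFinite T
      have : ∀ y : T, Fintype {x // φ x = (y : DoubleCoset.Quotient (K : Set G) (C : Set G))} :=
        fun y => Fintype.ofFinite _
      rw [Nat.card_eq_fintype_card, Fintype.card_sigma, finsum_eq_sum_of_fintype]
      congr 1
      ext y
      rw [Nat.card_eq_fintype_card]
    rw [h1]
    exact finsum_set_coe_eq_finsum_mem (f := fun y => Nat.card {x // φ x = y}) T
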